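/- Stochastic U(1)-frameness monotones from the number spectrum: Let S and T be nonempty finite sets (Finsets) of natural numbers and let k ∈ ℤ be such that for every t ∈ T, the integer (t : ℤ) − k is nonnegative and its natural-number value lies in S (i.e., T is contained in the shift of S by k). Then: (a) T.card ≤ S.card; and (b) for every i with 1 ≤ i ≤ T.card, letting a_i denote the i-th largest element of T and b_i the i-th largest element of S, one has a_i − min T ≤ b_i − min S. (The quantities 'i-th largest element minus the minimum' are the stochastic U(1)-frameness monotones F_i of the paper, and the cardinality of the spectrum is the analogue of the Schmidt number; by the stochastic transformation theorem, the hypothesis holds whenever the state with number spectrum S can be converted with nonzero probability into the state with number spectrum T by U(1)-invariant operations.) -/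

import Mathlib

private lemma fin_embed_aux {m n : ℕ} (f : Fin m ↪o Fin n) (j : Fin m) (d : ℕ)
    (hd : (j : ℕ) + d < m) : (f j : ℕ) + d ≤ (f ⟨(j : ℕ) + d, hd⟩ : ℕ) := by
  induction d with
  | zero => simp
  | succ d ih =>
    have hd' : (j : ℕ) + d < m := by omega
    have h1 := ih hd'
    have h2 : f ⟨(j : ℕ) + d, hd'⟩ < f ⟨(j : ℕ) + d + 1, hd⟩ := by
      apply f.strictMono
      simp [Fin.lt_def]
    simp only [Fin.lt_def] at h2
    show (f j : ℕ) + (d + 1) ≤ (f ⟨(j : ℕ) + d + 1, hd⟩ : ℕ)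
    omega

private lemma ith_largest_mono (A B : Finset ℕ) (hAB : A ⊆ B) (i : ℕ)
    (h1 : 1 ≤ i) (h2 : i ≤ A.card) :
    (A.sort (· ≤ ·)).getD (A.card - i) 0 ≤ (B.sort (· ≤ ·)).getD (B.card - i) 0 := by
  have hcard : A.card ≤ B.card := Finset.card_le_card hAB
  have hmle : ((A.sort (· ≤ ·) : List ℕ) : Multiset ℕ) ≤ ((B.sort (· ≤ ·) : List ℕ) : Multiset ℕ) := by
    rw [Finset.sort_eq, Finset.sort_eq]
    exact Finset.val_le_iff.mpr hAB
  have hsub : List.Sublist (A.sort (· ≤ ·)) (B.sort (· ≤ ·)) :=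
    List.sublist_of_subperm_of_pairwise (Multiset.coe_le.mp hmle)
      (A.pairwise_sort _) (B.pairwise_sort _)
  obtain ⟨f, hf⟩ := List.sublist_iff_exists_fin_orderEmbedding_get_eq.mp hsub
  have hlA : (A.sort (· ≤ ·)).length = A.card := Finset.length_sort _
  have hlB : (B.sort (· ≤ ·)).length = B.card := Finset.length_sort _
  have hAi : A.card - i < (A.sort (· ≤ ·)).length := by omega
  have hBi : B.card - i < (B.sort (· ≤ ·)).length := by omega
  set j : Fin (A.sort (· ≤ ·)).length := ⟨A.card - i, hAi⟩ with hj
  have hd : (j : ℕ) + (i - 1) < (A.sort (· ≤ ·)).length := by simp [hj]; omega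
  have hfd := fin_embed_aux f j (i - 1) hd
  have hlt : (f ⟨(j : ℕ) + (i - 1), hd⟩ : ℕ) < (B.sort (· ≤ ·)).length := Fin.is_lt _
  have hfj : (f j : ℕ) ≤ B.card - i := by omega
  have hget : (A.sort (· ≤ ·)).get j = (B.sort (· ≤ ·)).get (f j) := hf j
  have hmono : (B.sort (· ≤ ·)).get (f j) ≤ (B.sort (· ≤ ·)).get ⟨B.card - i, hBi⟩ :=
    (B.pairwise_sort _).rel_get_of_le (by simpa [Fin.le_def] using hfj)
  rw [List.getD_eq_getElem _ _ hAi, List.getD_eq_getElem _ _ hBi]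
  calc (A.sort (· ≤ ·))[A.card - i] = (A.sort (· ≤ ·)).get j := rfl
    _ = (B.sort (· ≤ ·)).get (f j) := hget
    _ ≤ (B.sort (· ≤ ·)).get ⟨B.card - i, hBi⟩ := hmono
    _ = (B.sort (· ≤ ·))[B.card - i] := rfl

/-- **Stochastic U(1)-frameness monotones from the number spectrum.**
If every element `t` of the nonempty finite number spectrum `T` satisfies
`(t : ℤ) - k ≥ 0` with `((t : ℤ) - k).toNat ∈ S` (i.e. `T` is contained in the shift
of `S` by `k`), then `T.card ≤ S.card` (the spectrum cardinality is a stochastic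
monotone), and for each `1 ≤ i ≤ T.card` the `i`-th largest element of `T` minus
`min T` is at most the `i`-th largest element of `S` minus `min S` (the monotones
`F_i` are nonincreasing). The `i`-th largest element of a finite set `X` is the
entry at index `X.card - i` of the ascending sort of `X`. -/
theorem u1_spectrum_stochastic_monotones
    (S T : Finset ℕ) (hS : S.Nonempty) (hT : T.Nonempty) (k : ℤ)
    (h : ∀ t ∈ T, 0 ≤ (t : ℤ) - k ∧ ((t : ℤ) - k).toNat ∈ S) :
    T.card ≤ S.card ∧
    ∀ i : ℕ, 1 ≤ i → i ≤ T.card →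
      (T.sort (· ≤ ·)).getD (T.card - i) 0 - T.min' hT ≤
        (S.sort (· ≤ ·)).getD (S.card - i) 0 - S.min' hS := by
  classical
  set g : ℕ → ℕ := fun t => ((t : ℤ) - k).toNat with hg
  have hgval : ∀ t ∈ T, (g t : ℤ) = (t : ℤ) - k := fun t ht =>
    Int.toNat_of_nonneg (h t ht).1
  have hinj : Set.InjOn g T := by
    intro a ha b hb hab
    have h1 := hgval a ha
    have h2 := hgval b hb
    rw [hab] at h1
    omega
  set T' : Finset ℕ := T.image g with hT'
  have hT'S : T' ⊆ S := by
    intro x hx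
    rw [hT', Finset.mem_image] at hx
    obtain ⟨t, ht, rfl⟩ := hx
    exact (h t ht).2
  have hcard : T'.card = T.card := Finset.card_image_of_injOn hinj
  have hcardle : T.card ≤ S.card := hcard ▸ Finset.card_le_card hT'S
  refine ⟨hcardle, fun i hi1 hi2 => ?_⟩
  -- sorted image equals mapped sort
  have hmapsorted : ((T.sort (· ≤ ·)).map g).Pairwise (· ≤ ·) := by
    rw [List.pairwise_map]
    refine (T.pairwise_sort (· ≤ ·)).imp_of_mem ?_
    intro a b ha hb hab
    have ha' := Finset.mem_sort (α := ℕ) (· ≤ ·) |>.mp ha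
    have hb' := Finset.mem_sort (α := ℕ) (· ≤ ·) |>.mp hb
    have h1 := hgval a ha'
    have h2 := hgval b hb'
    omega
  have hperm : List.Perm ((T.sort (· ≤ ·)).map g) (T'.sort (· ≤ ·)) := by
    apply Multiset.coe_eq_coe.mp
    rw [Finset.sort_eq, hT', Finset.image_val_of_injOn hinj, ← Finset.sort_eq T (· ≤ ·),
      ← Multiset.map_coe]
  have hsorteq : T'.sort (· ≤ ·) = (T.sort (· ≤ ·)).map g :=
    (List.Perm.eq_of_pairwise' (T'.pairwise_sort _) hmapsorted hperm.symm)
  -- the i-th largest elements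
  have hlT : (T.sort (· ≤ ·)).length = T.card := Finset.length_sort _
  have hTi : T.card - i < (T.sort (· ≤ ·)).length := by omega
  set a : ℕ := (T.sort (· ≤ ·)).getD (T.card - i) 0 with ha
  have haget : a = (T.sort (· ≤ ·))[T.card - i] := List.getD_eq_getElem _ _ hTi
  have haT : a ∈ T := by
    rw [← Finset.mem_sort (α := ℕ) (· ≤ ·), haget]
    exact List.getElem_mem _
  have hminT : T.min' hT ∈ T := T.min'_mem hT
  have hT'ne : T'.Nonempty := hT.image g
  -- min of T' is g of min of T
  have hminT' : T'.min' hT'ne = g (T.min' hT) := by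
    apply le_antisymm
    · exact Finset.min'_le _ _ (Finset.mem_image_of_mem g hminT)
    · apply Finset.le_min'
      intro y hy
      rw [hT', Finset.mem_image] at hy
      obtain ⟨t, ht, rfl⟩ := hy
      have h1 := hgval t ht
      have h2 := hgval _ hminT
      have h3 := T.min'_le t ht
      omega
  -- i-th largest of T' is g a
  have hT'i : T'.card - i < (T'.sort (· ≤ ·)).length := by
    rw [Finset.length_sort]; omega
  have ha' : (T'.sort (· ≤ ·)).getD (T'.card - i) 0 = g a := by
    rw [List.getD_eq_getElem _ _ hT'i, haget]
    have : T'.card - i = T.card - i := by rw [hcard]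
    simp only [hsorteq, this, List.getElem_map]
  -- apply the subset lemma
  have hkey := ith_largest_mono T' S hT'S i hi1 (by omega)
  rw [ha'] at hkey
  -- min S ≤ min T'
  have hminle : S.min' hS ≤ T'.min' hT'ne :=
    S.min'_le _ (hT'S (T'.min'_mem hT'ne))
  rw [hminT'] at hminle
  -- arithmetic
  have hga := hgval a haT
  have hgm := hgval _ hminT
  have hmla : T.min' hT ≤ a := T.min'_le a haT
  omega
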